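/- For all t,s>0 and all θ₁,θ₃∈ℝ, ∫_0^{2π} p_t(θ₁,θ₂)·p_s(θ₂,θ₃) dθ₂ = p_{t+s}(θ₁,θ₃) (the Chapman–Kolmogorov identity for the heat kernel on the circle). -/

import Mathlib

open Real MeasureTheory Set intervalIntegral

set_option maxHeartbeats 1000000

/-- The heat kernel `f_t` on the circle `ℝ/2πℤ` (up to the factor `(2πt)^{-1/2}`). -/
noncomputable def villainF (t x : ℝ) : ℝ :=
  ∑' n : ℤ, Real.exp (-(x + 2 * π * n) ^ 2 / (2 * t))

/-- The transition kernel `p_t` of Brownian motion on the circle `ℝ/2πℤ`. -/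
noncomputable def circleHeatKernel (t θ₁ θ₂ : ℝ) : ℝ :=
  (2 * π * t) ^ (-(1 / 2 : ℝ)) * villainF t (θ₁ - θ₂)


lemma summable_pow_natAbs {r : ℝ} (hr0 : 0 ≤ r) (hr1 : r < 1) :
    Summable (fun n : ℤ => r ^ n.natAbs) := by
  apply Summable.of_nat_of_neg <;>
    simpa using summable_geometric_of_lt_one hr0 hr1

lemma gauss_term_le {t : ℝ} (ht : 0 < t) (x : ℝ) (n : ℤ) :
    Real.exp (-(x + 2 * π * n) ^ 2 / (2 * t))
      ≤ Real.exp (x ^ 2 / (2 * t)) * Real.exp (-(π ^ 2 / t)) ^ n.natAbs := by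
  rw [← Real.exp_nat_mul, ← Real.exp_add]
  apply Real.exp_le_exp.mpr
  have habs : (n.natAbs : ℝ) ≤ (n : ℝ) ^ 2 := by
    rcases eq_or_ne n 0 with h | h
    · simp [h]
    · have h1 : (1 : ℤ) ≤ |n| := Int.one_le_abs (by exact_mod_cast h)
      have h2 : (n.natAbs : ℝ) = |(n : ℝ)| := by
        rw [Nat.cast_natAbs]; push_cast; rfl
      have h3 : (1 : ℝ) ≤ |(n : ℝ)| := by
        rw [← Int.cast_abs]; exact_mod_cast h1
      rw [h2, ← sq_abs]
      nlinarith
  have hkey : -(x + 2 * π * n) ^ 2 ≤ x ^ 2 - 2 * (n.natAbs : ℝ) * π ^ 2 := by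
    nlinarith [sq_nonneg (x + π * n), sq_nonneg π, pi_pos.le]
  have h2t : (0:ℝ) < 2 * t := by linarith
  calc -(x + 2 * π * n) ^ 2 / (2 * t)
      ≤ (x ^ 2 - 2 * (n.natAbs : ℝ) * π ^ 2) / (2 * t) := by gcongr
    _ = x ^ 2 / (2 * t) + (n.natAbs : ℝ) * -(π ^ 2 / t) := by
        field_simp; ring

lemma summable_gauss {t : ℝ} (ht : 0 < t) (x : ℝ) :
    Summable (fun n : ℤ => Real.exp (-(x + 2 * π * n) ^ 2 / (2 * t))) := by
  refine Summable.of_nonneg_of_le (fun n => (Real.exp_pos _).le)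
    (fun n => gauss_term_le ht x n) ?_
  exact (summable_pow_natAbs (Real.exp_pos _).le
    (Real.exp_lt_one_iff.mpr (neg_lt_zero.mpr (by positivity)))).mul_left _

lemma gauss_conv {t s : ℝ} (ht : 0 < t) (hs : 0 < s) (a b : ℝ) :
    (∫ u : ℝ, Real.exp (-(a - u) ^ 2 / (2 * t)) * Real.exp (-(u - b) ^ 2 / (2 * s)))
      = Real.sqrt (2 * π * t * s / (t + s)) * Real.exp (-(a - b) ^ 2 / (2 * (t + s))) := by
  have hts : 0 < t + s := by linarith
  have hk : 0 < (t + s) / (2 * t * s) := by positivity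
  have key : ∀ u : ℝ, Real.exp (-(a - u) ^ 2 / (2 * t)) * Real.exp (-(u - b) ^ 2 / (2 * s))
      = Real.exp (-((t + s) / (2 * t * s)) * (u - (s * a + t * b) / (t + s)) ^ 2)
        * Real.exp (-(a - b) ^ 2 / (2 * (t + s))) := by
    intro u
    rw [← Real.exp_add, ← Real.exp_add]
    congr 1
    field_simp
    ring
  simp_rw [key]
  rw [MeasureTheory.integral_mul_const]
  have : (∫ u : ℝ, Real.exp (-((t + s) / (2 * t * s)) * (u - (s * a + t * b) / (t + s)) ^ 2))
      = ∫ u : ℝ, Real.exp (-((t + s) / (2 * t * s)) * u ^ 2) :=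
    MeasureTheory.integral_sub_right_eq_self
      (fun u => Real.exp (-((t + s) / (2 * t * s)) * u ^ 2)) _
  rw [this, integral_gaussian]
  congr 2
  rw [eq_div_iff hts.ne']
  field_simp

lemma hasSum_intervalIntegral_shifts {f : ℝ → ℝ} (hf : MeasureTheory.Integrable f) :
    HasSum (fun n : ℤ => ∫ x in (2 * π * n)..(2 * π * n + 2 * π), f x) (∫ x, f x) := by
  have h2π : (0:ℝ) < 2 * π := by positivity
  have key := MeasureTheory.hasSum_integral_iUnion
    (s := fun n : ℤ => Ioc ((0:ℝ) + n • (2 * π)) (0 + (n + 1) • (2 * π)))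
    (fun n => measurableSet_Ioc) (pairwise_disjoint_Ioc_add_zsmul (0:ℝ) (2 * π))
    hf.integrableOn
  rw [iUnion_Ioc_add_zsmul h2π 0, MeasureTheory.setIntegral_univ] at key
  convert key using 2 with n
  · rfl
  have h1 : (0:ℝ) + n • (2 * π) = 2 * π * n := by
    rw [zsmul_eq_mul]; ring
  have h2 : (0:ℝ) + (n + 1) • (2 * π) = 2 * π * n + 2 * π := by
    rw [zsmul_eq_mul]; push_cast; ring
  rw [h1, h2, intervalIntegral.integral_of_le (by linarith)]

lemma rpow_neg_half_eq (a : ℝ) (ha : 0 ≤ a) :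
    a ^ (-(1 / 2 : ℝ)) = (Real.sqrt a)⁻¹ := by
  rw [Real.rpow_neg ha, Real.sqrt_eq_rpow]

lemma const_combine {t s : ℝ} (ht : 0 < t) (hs : 0 < s) :
    (2 * π * t) ^ (-(1 / 2 : ℝ)) * (2 * π * s) ^ (-(1 / 2 : ℝ))
        * Real.sqrt (2 * π * t * s / (t + s))
      = (2 * π * (t + s)) ^ (-(1 / 2 : ℝ)) := by
  have hts : 0 < t + s := by linarith
  have hπ := pi_pos
  rw [rpow_neg_half_eq _ (by positivity), rpow_neg_half_eq _ (by positivity),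
    rpow_neg_half_eq _ (by positivity)]
  have hA : (0:ℝ) < Real.sqrt (2 * π * t) := Real.sqrt_pos.mpr (by positivity)
  have hB : (0:ℝ) < Real.sqrt (2 * π * s) := Real.sqrt_pos.mpr (by positivity)
  have hD : (0:ℝ) < Real.sqrt (2 * π * (t + s)) := Real.sqrt_pos.mpr (by positivity)
  have hC : Real.sqrt (2 * π * t * s / (t + s)) * Real.sqrt (2 * π * (t + s))
      = Real.sqrt (2 * π * t) * Real.sqrt (2 * π * s) := by
    rw [← Real.sqrt_mul (by positivity), ← Real.sqrt_mul (by positivity)]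
    congr 1
    field_simp
  field_simp
  linarith [hC]

lemma main_integral {t s : ℝ} (ht : 0 < t) (hs : 0 < s) (θ₁ θ₃ : ℝ) :
    (∫ θ₂ in (0:ℝ)..(2 * π), villainF t (θ₁ - θ₂) * villainF s (θ₂ - θ₃))
      = Real.sqrt (2 * π * t * s / (t + s)) * villainF (t + s) (θ₁ - θ₃) := by
  have hπ := pi_pos
  have h2π : (0:ℝ) < 2 * π := by positivity
  have hts : 0 < t + s := by linarith
  set F : ℤ × ℤ → ℝ → ℝ := fun p θ₂ =>
    Real.exp (-(θ₁ - θ₂ + 2 * π * p.1) ^ 2 / (2 * t)) *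
      Real.exp (-(θ₂ - θ₃ + 2 * π * p.2) ^ 2 / (2 * s)) with hF
  -- (a) pointwise product expansion
  have ha : ∀ θ₂ : ℝ, villainF t (θ₁ - θ₂) * villainF s (θ₂ - θ₃) = ∑' p : ℤ × ℤ, F p θ₂ := by
    intro θ₂
    rw [villainF, villainF, Summable.tsum_mul_tsum
      (f := fun n : ℤ => Real.exp (-(θ₁ - θ₂ + 2 * π * n) ^ 2 / (2 * t)))
      (g := fun n : ℤ => Real.exp (-(θ₂ - θ₃ + 2 * π * n) ^ 2 / (2 * s)))
      (summable_gauss ht (θ₁ - θ₂)) (summable_gauss hs (θ₂ - θ₃))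
      (Summable.mul_of_nonneg
        (f := fun n : ℤ => Real.exp (-(θ₁ - θ₂ + 2 * π * n) ^ 2 / (2 * t)))
        (g := fun n : ℤ => Real.exp (-(θ₂ - θ₃ + 2 * π * n) ^ 2 / (2 * s)))
        (summable_gauss ht (θ₁ - θ₂)) (summable_gauss hs (θ₂ - θ₃))
        (fun n => (Real.exp_pos _).le) (fun n => (Real.exp_pos _).le))]
  have hFc : ∀ p : ℤ × ℤ, Continuous (F p) := fun p => by fun_prop
  have hFnonneg : ∀ (p : ℤ × ℤ) (x : ℝ), 0 ≤ F p x := fun p x => by positivity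
  have hμ : ∀ p : ℤ × ℤ, Integrable (F p) (volume.restrict (Ioc (0:ℝ) (2 * π))) :=
    fun p => (hFc p).integrableOn_Ioc
  -- uniform bounds
  set B : ℝ := 2 * π * (Real.exp ((|θ₁| + 2 * π) ^ 2 / (2 * t)) *
    Real.exp ((|θ₃| + 2 * π) ^ 2 / (2 * s))) with hB
  set r₁ : ℝ := Real.exp (-(π ^ 2 / t)) with hr₁
  set r₂ : ℝ := Real.exp (-(π ^ 2 / s)) with hr₂
  have hbound : ∀ p : ℤ × ℤ, ∀ θ₂ ∈ Ioc (0:ℝ) (2 * π),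
      F p θ₂ ≤ (B / (2 * π)) * (r₁ ^ p.1.natAbs * r₂ ^ p.2.natAbs) := by
    intro p θ₂ hθ₂
    have e1 := gauss_term_le ht (θ₁ - θ₂) p.1
    have e2 := gauss_term_le hs (θ₂ - θ₃) p.2
    obtain ⟨hθ₂1, hθ₂2⟩ := hθ₂
    have b1 : Real.exp ((θ₁ - θ₂) ^ 2 / (2 * t)) ≤ Real.exp ((|θ₁| + 2 * π) ^ 2 / (2 * t)) := by
      apply Real.exp_le_exp.mpr
      apply div_le_div_of_nonneg_right ?_ (by positivity)
      apply sq_le_sq' <;> nlinarith [le_abs_self θ₁, neg_abs_le θ₁]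
    have b2 : Real.exp ((θ₂ - θ₃) ^ 2 / (2 * s)) ≤ Real.exp ((|θ₃| + 2 * π) ^ 2 / (2 * s)) := by
      apply Real.exp_le_exp.mpr
      apply div_le_div_of_nonneg_right ?_ (by positivity)
      apply sq_le_sq' <;> nlinarith [le_abs_self θ₃, neg_abs_le θ₃]
    calc F p θ₂ ≤ (Real.exp ((θ₁ - θ₂) ^ 2 / (2 * t)) * r₁ ^ p.1.natAbs) *
        (Real.exp ((θ₂ - θ₃) ^ 2 / (2 * s)) * r₂ ^ p.2.natAbs) :=
          mul_le_mul e1 e2 (Real.exp_pos _).le (by positivity)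
      _ ≤ (Real.exp ((|θ₁| + 2 * π) ^ 2 / (2 * t)) * r₁ ^ p.1.natAbs) *
        (Real.exp ((|θ₃| + 2 * π) ^ 2 / (2 * s)) * r₂ ^ p.2.natAbs) :=
          mul_le_mul (mul_le_mul_of_nonneg_right b1 (by positivity))
            (mul_le_mul_of_nonneg_right b2 (by positivity)) (by positivity) (by positivity)
      _ = (B / (2 * π)) * (r₁ ^ p.1.natAbs * r₂ ^ p.2.natAbs) := by
          rw [hB]; field_simp
  have hInt_le : ∀ p : ℤ × ℤ, (∫ θ₂ in Ioc (0:ℝ) (2 * π), ‖F p θ₂‖)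
      ≤ B * (r₁ ^ p.1.natAbs * r₂ ^ p.2.natAbs) := by
    intro p
    have hb' : ∀ θ₂ ∈ Ioc (0:ℝ) (2 * π),
        ‖F p θ₂‖ ≤ (B / (2 * π)) * (r₁ ^ p.1.natAbs * r₂ ^ p.2.natAbs) := fun θ₂ h => by
      rw [Real.norm_of_nonneg (hFnonneg p θ₂)]; exact hbound p θ₂ h
    calc (∫ θ₂ in Ioc (0:ℝ) (2 * π), ‖F p θ₂‖)
        ≤ ∫ _ in Ioc (0:ℝ) (2 * π), (B / (2 * π)) * (r₁ ^ p.1.natAbs * r₂ ^ p.2.natAbs) :=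
          setIntegral_mono_on (hμ p).norm (integrableOn_const
            (by rw [Real.volume_Ioc]; exact ENNReal.ofReal_ne_top))
            measurableSet_Ioc hb'
      _ = B * (r₁ ^ p.1.natAbs * r₂ ^ p.2.natAbs) := by
          rw [setIntegral_const, Real.volume_real_Ioc, smul_eq_mul,
            max_eq_left (by linarith)]
          field_simp
          ring
  have hsummable_r : Summable (fun p : ℤ × ℤ => r₁ ^ p.1.natAbs * r₂ ^ p.2.natAbs) :=
    Summable.mul_of_nonneg
      (f := fun n : ℤ => r₁ ^ n.natAbs) (g := fun n : ℤ => r₂ ^ n.natAbs)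
      (summable_pow_natAbs (Real.exp_pos _).le
        (Real.exp_lt_one_iff.mpr (neg_lt_zero.mpr (by positivity))))
      (summable_pow_natAbs (Real.exp_pos _).le
        (Real.exp_lt_one_iff.mpr (neg_lt_zero.mpr (by positivity))))
      (fun n => by positivity) (fun n => by positivity)
  have hF_sum : Summable fun p : ℤ × ℤ => ∫ θ₂ in Ioc (0:ℝ) (2 * π), ‖F p θ₂‖ :=
    Summable.of_nonneg_of_le (fun p => integral_nonneg fun _ => norm_nonneg _)
      hInt_le (hsummable_r.mul_left B)
  -- the HasSum over pairs
  have hHS := MeasureTheory.hasSum_integral_of_summable_integral_norm hμ hF_sum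
  -- per-term evaluation
  set J : ℤ → ℤ → ℝ := fun k n => ∫ x in (2 * π * (n:ℝ))..(2 * π * (n:ℝ) + 2 * π),
    Real.exp (-(θ₁ - x) ^ 2 / (2 * t)) *
      Real.exp (-(x - θ₃ + 2 * π * (k:ℝ)) ^ 2 / (2 * s)) with hJ
  have hterm : ∀ p : ℤ × ℤ,
      (∫ θ₂ in Ioc (0:ℝ) (2 * π), F p θ₂) = J (p.1 + p.2) (-p.1) := by
    intro p
    rw [← intervalIntegral.integral_of_le h2π.le]
    have heq : ∀ x : ℝ, F p x = (fun u => Real.exp (-(θ₁ - u) ^ 2 / (2 * t)) *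
        Real.exp (-(u - θ₃ + 2 * π * ((p.1 + p.2 : ℤ):ℝ)) ^ 2 / (2 * s))) (x - 2 * π * p.1) := by
      intro x
      simp only [hF]
      push_cast
      congr 2 <;> ring
    have h5 := intervalIntegral.integral_comp_sub_right (a := (0:ℝ)) (b := 2 * π)
      (fun u => Real.exp (-(θ₁ - u) ^ 2 / (2 * t)) *
            Real.exp (-(u - θ₃ + 2 * π * ((p.1 + p.2 : ℤ):ℝ)) ^ 2 / (2 * s)))
      (2 * π * (p.1:ℝ))
    calc (∫ x in (0:ℝ)..(2 * π), F p x)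
        = ∫ x in (0:ℝ)..(2 * π), (fun u => Real.exp (-(θ₁ - u) ^ 2 / (2 * t)) *
            Real.exp (-(u - θ₃ + 2 * π * ((p.1 + p.2 : ℤ):ℝ)) ^ 2 / (2 * s)))
              (x - 2 * π * (p.1:ℝ)) :=
          intervalIntegral.integral_congr (fun x _ => heq x)
      _ = ∫ x in ((0:ℝ) - 2 * π * (p.1:ℝ))..(2 * π - 2 * π * (p.1:ℝ)),
            (fun u => Real.exp (-(θ₁ - u) ^ 2 / (2 * t)) *
              Real.exp (-(u - θ₃ + 2 * π * ((p.1 + p.2 : ℤ):ℝ)) ^ 2 / (2 * s))) x := h5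
      _ = J (p.1 + p.2) (-p.1) := by
          simp only [hJ]
          congr 1 <;> push_cast <;> ring
  -- integrability of the full-line Gaussian products
  have hGint : ∀ k : ℤ, Integrable (fun u : ℝ => Real.exp (-(θ₁ - u) ^ 2 / (2 * t)) *
      Real.exp (-(u - θ₃ + 2 * π * (k:ℝ)) ^ 2 / (2 * s))) := by
    intro k
    have hmaj : Integrable (fun u : ℝ => Real.exp (-(1 / (2 * t)) * (u - θ₁) ^ 2)) :=
      (integrable_exp_neg_mul_sq (by positivity)).comp_sub_right θ₁
    apply hmaj.mono' (Continuous.aestronglyMeasurable (by fun_prop))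
    filter_upwards with u
    rw [Real.norm_of_nonneg (by positivity)]
    calc Real.exp (-(θ₁ - u) ^ 2 / (2 * t)) * Real.exp (-(u - θ₃ + 2 * π * (k:ℝ)) ^ 2 / (2 * s))
        ≤ Real.exp (-(θ₁ - u) ^ 2 / (2 * t)) * 1 :=
          mul_le_mul_of_nonneg_left
            (Real.exp_le_one_iff.mpr (by rw [neg_div]; exact neg_nonpos.mpr (by positivity)))
            (Real.exp_pos _).le
      _ = Real.exp (-(1 / (2 * t)) * (u - θ₁) ^ 2) := by rw [mul_one]; congr 1; ring
  -- inner sums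
  have hinner : ∀ k : ℤ, HasSum (fun n : ℤ => J k n)
      (Real.sqrt (2 * π * t * s / (t + s)) *
        Real.exp (-((θ₁ - θ₃) + 2 * π * (k:ℝ)) ^ 2 / (2 * (t + s)))) := by
    intro k
    have h1 := hasSum_intervalIntegral_shifts (hGint k)
    have h2 : (∫ u : ℝ, Real.exp (-(θ₁ - u) ^ 2 / (2 * t)) *
        Real.exp (-(u - θ₃ + 2 * π * (k:ℝ)) ^ 2 / (2 * s)))
        = Real.sqrt (2 * π * t * s / (t + s)) *
          Real.exp (-((θ₁ - θ₃) + 2 * π * (k:ℝ)) ^ 2 / (2 * (t + s))) := by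
      have h3 : ∀ u : ℝ, -(u - θ₃ + 2 * π * (k:ℝ)) ^ 2 / (2 * s)
          = -(u - (θ₃ - 2 * π * (k:ℝ))) ^ 2 / (2 * s) := fun u => by ring
      simp_rw [h3]
      rw [gauss_conv ht hs θ₁ (θ₃ - 2 * π * (k:ℝ))]
      congr 2
      ring
    rw [← h2]
    exact h1
  -- assemble
  have hψ : ∀ q : ℤ × ℤ, J (-q.2 + (q.1 + q.2)) (-(-q.2)) = J q.1 q.2 := by
    intro q
    congr 1 <;> ring
  set ψ : ℤ × ℤ ≃ ℤ × ℤ :=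
    ⟨fun q => (-q.2, q.1 + q.2), fun p => (p.1 + p.2, -p.1),
      fun q => by simp, fun p => by simp⟩ with hψdef
  have hsum0 : Summable fun p : ℤ × ℤ => J (p.1 + p.2) (-p.1) :=
    hHS.summable.congr hterm
  have hsumJ : Summable fun q : ℤ × ℤ => J q.1 q.2 :=
    ((ψ.summable_iff (f := fun p : ℤ × ℤ => J (p.1 + p.2) (-p.1))).mpr hsum0).congr
      (fun q => hψ q)
  calc (∫ θ₂ in (0:ℝ)..(2 * π), villainF t (θ₁ - θ₂) * villainF s (θ₂ - θ₃))
      = ∫ θ₂ in Ioc (0:ℝ) (2 * π), ∑' p : ℤ × ℤ, F p θ₂ := by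
        rw [intervalIntegral.integral_of_le h2π.le]
        exact setIntegral_congr_fun measurableSet_Ioc (fun θ₂ _ => ha θ₂)
    _ = ∑' p : ℤ × ℤ, ∫ θ₂ in Ioc (0:ℝ) (2 * π), F p θ₂ :=
        (MeasureTheory.integral_tsum_of_summable_integral_norm hμ hF_sum).symm
    _ = ∑' p : ℤ × ℤ, J (p.1 + p.2) (-p.1) := tsum_congr hterm
    _ = ∑' q : ℤ × ℤ, J q.1 q.2 := by
        rw [← Equiv.tsum_eq ψ (fun p : ℤ × ℤ => J (p.1 + p.2) (-p.1))]
        exact tsum_congr fun q => hψ q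
    _ = ∑' (k : ℤ), ∑' (n : ℤ), J k n := Summable.tsum_prod hsumJ
    _ = ∑' (k : ℤ), Real.sqrt (2 * π * t * s / (t + s)) *
          Real.exp (-((θ₁ - θ₃) + 2 * π * (k:ℝ)) ^ 2 / (2 * (t + s))) :=
        tsum_congr fun k => (hinner k).tsum_eq
    _ = Real.sqrt (2 * π * t * s / (t + s)) * villainF (t + s) (θ₁ - θ₃) := by
        rw [villainF, tsum_mul_left]

/-- Chapman–Kolmogorov identity for the heat kernel on the
circle: for `t, s > 0` and `θ₁, θ₃ ∈ ℝ`,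
`∫_0^{2π} p_t(θ₁,θ₂) p_s(θ₂,θ₃) dθ₂ = p_{t+s}(θ₁,θ₃)`. -/
theorem statement_6 (t s : ℝ) (ht : 0 < t) (hs : 0 < s) (θ₁ θ₃ : ℝ) :
    (∫ θ₂ in (0 : ℝ)..(2 * π), circleHeatKernel t θ₁ θ₂ * circleHeatKernel s θ₂ θ₃)
      = circleHeatKernel (t + s) θ₁ θ₃ := by
  simp only [circleHeatKernel]
  have hmul : ∀ θ₂ : ℝ, ((2 * π * t) ^ (-(1 / 2 : ℝ)) * villainF t (θ₁ - θ₂)) *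
      ((2 * π * s) ^ (-(1 / 2 : ℝ)) * villainF s (θ₂ - θ₃))
      = ((2 * π * t) ^ (-(1 / 2 : ℝ)) * (2 * π * s) ^ (-(1 / 2 : ℝ))) *
        (villainF t (θ₁ - θ₂) * villainF s (θ₂ - θ₃)) := fun θ₂ => by ring
  simp_rw [hmul]
  rw [intervalIntegral.integral_const_mul, main_integral ht hs, ← mul_assoc,
    const_combine ht hs]
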